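/- For every odd integer n = 2k+1 >= 7 and every non-edge e of the cycle C_n, the graph C_n + e (the cycle with chord e added) admits an identifying code of size at most k + 1. -/

import Mathlib

set_option maxHeartbeats 1000000

open SimpleGraph

/-- The closed neighborhood of a vertex. -/
def cnbr {V : Type*} (G : SimpleGraph V) (v : V) : Set V := insert v (G.neighborSet v)

/-- `C` is an identifying code of `G`: every vertex is dominated by `C` and the
closed-neighborhood traces on `C` are pairwise distinct. -/
def IsIdCode {V : Type*} (G : SimpleGraph V) (C : Set V) : Prop :=
  (∀ v, (cnbr G v ∩ C).Nonempty) ∧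
  ∀ u v : V, cnbr G u ∩ C = cnbr G v ∩ C → u = v

/-- The minimum size of an identifying code of `G`. -/
noncomputable def gammaID {V : Type*} (G : SimpleGraph V) : ℕ :=
  sInf {n | ∃ C : Set V, IsIdCode G C ∧ C.ncard = n}

private lemma mod_cases (s n : ℕ) (h : s < 2 * n) :
    (s < n ∧ s % n = s) ∨ (n ≤ s ∧ s % n = s - n) := by
  rcases Nat.lt_or_ge s n with h' | h'
  · exact Or.inl ⟨h', Nat.mod_eq_of_lt h'⟩
  · exact Or.inr ⟨h', by rw [Nat.mod_eq_sub_mod h', Nat.mod_eq_of_lt (by omega)]⟩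

private lemma fin_sub_val {n : ℕ} (x y : Fin n) :
    (x - y).val = (n - y.val + x.val) % n := by
  rw [Fin.sub_def]

private lemma fin_sub_val_one {n : ℕ} (hn : 2 ≤ n) (x y : Fin n) :
    ((x - y : Fin n).val = 1) ↔ (x.val = y.val + 1 ∨ (y.val = n - 1 ∧ x.val = 0)) := by
  have hx := x.isLt; have hy := y.isLt
  rw [fin_sub_val]
  rcases mod_cases (n - y.val + x.val) n (by omega) with ⟨h1, h2⟩ | ⟨h1, h2⟩ <;> rw [h2] <;> omega

private lemma fin_sub_val_comp {n : ℕ} (x y : Fin n) (hxy : x ≠ y) :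
    (y - x).val ≠ 0 ∧ (x - y).val = n - (y - x).val := by
  have hx := x.isLt; have hy := y.isLt
  have hne : x.val ≠ y.val := fun h => hxy (Fin.ext h)
  rw [fin_sub_val, fin_sub_val]
  rcases mod_cases (n - x.val + y.val) n (by omega) with ⟨h1, h2⟩ | ⟨h1, h2⟩ <;>
    rcases mod_cases (n - y.val + x.val) n (by omega) with ⟨g1, g2⟩ | ⟨g1, g2⟩ <;>
      rw [h2, g2] <;> omega

private lemma edge_comm' {V : Type*} (s t : V) : SimpleGraph.edge s t = SimpleGraph.edge t s := by
  ext a b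
  rw [edge_adj, edge_adj]
  tauto

private lemma idcode_map {V W : Type*} {G : SimpleGraph V} {G' : SimpleGraph W} (φ : G ≃g G')
    {C : Set V} (h : IsIdCode G C) : IsIdCode G' (⇑φ '' C) := by
  have hinj : Function.Injective ⇑φ := φ.toEquiv.injective
  have hnbr : ∀ w : V, cnbr G' (φ w) = ⇑φ '' cnbr G w := by
    intro w
    ext z
    obtain ⟨z', rfl⟩ := φ.toEquiv.surjective z
    rw [show φ.toEquiv z' = φ z' from rfl]
    simp only [cnbr, Set.mem_insert_iff, SimpleGraph.mem_neighborSet,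
      hinj.mem_set_image, hinj.eq_iff, φ.map_adj_iff]
  have key : ∀ w : V, cnbr G' (φ w) ∩ (⇑φ '' C) = ⇑φ '' (cnbr G w ∩ C) := by
    intro w
    rw [Set.image_inter hinj, hnbr]
  constructor
  · intro w
    obtain ⟨w', rfl⟩ := φ.toEquiv.surjective w
    rw [show φ.toEquiv w' = φ w' from rfl, key]
    exact (h.1 w').image _
  · intro x y hxy
    obtain ⟨x', rfl⟩ := φ.toEquiv.surjective x
    obtain ⟨y', rfl⟩ := φ.toEquiv.surjective y
    rw [show φ.toEquiv x' = φ x' from rfl, show φ.toEquiv y' = φ y' from rfl, key, key] at hxy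
    rw [show φ.toEquiv x' = φ x' from rfl, show φ.toEquiv y' = φ y' from rfl]
    exact congrArg _ (h.2 x' y' (Set.image_eq_image hinj |>.mp hxy))

private def transIso (n : ℕ) [NeZero n] (a b a' b' c : Fin n)
    (ha : a' = a + c) (hb : b' = b + c) :
    (cycleGraph n ⊔ edge a b) ≃g (cycleGraph n ⊔ edge a' b') := by
  subst ha hb
  exact
  { toEquiv := Equiv.addRight c
    map_rel_iff' := by
      intro x y
      simp only [Equiv.coe_addRight, sup_adj, cycleGraph_adj', edge_adj,
        add_sub_add_right_eq_sub, add_left_inj, ne_eq] }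

private lemma arithA (n k d a b : ℕ) (hnk : n = 2*k+1) (hn : 7 ≤ n) (hd2 : d%2=0)
    (hd4 : 4 ≤ d) (hdn : d+3 ≤ n) (ha : a < n) (hb : b < n)
    (hm : ∀ m, m < n →
      (((m = a ∨ (m = a+1 ∨ (a = n-1 ∧ m = 0)) ∨ (a = m+1 ∨ (m = n-1 ∧ a = 0)) ∨
          (a = 0 ∧ m = d) ∨ (a = d ∧ m = 0)) ∧ m%2 = 0) ↔
       ((m = b ∨ (m = b+1 ∨ (b = n-1 ∧ m = 0)) ∨ (b = m+1 ∨ (m = n-1 ∧ b = 0)) ∨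
          (b = 0 ∧ m = d) ∨ (b = d ∧ m = 0)) ∧ m%2 = 0))) :
    a = b := by
  by_cases pa : a % 2 = 0 <;> by_cases pb : b % 2 = 0
  · have f1 := (hm a ha).mp (by omega)
    have f2 := (hm b hb).mpr (by omega)
    have f3 := fun h : a = 0 => (hm d (by omega)).mp (by omega)
    have f4 := fun h : b = 0 => (hm d (by omega)).mpr (by omega)
    have f5 := fun h : a = 0 => (hm (n-1) (by omega)).mp (by omega)
    have f6 := fun h : b = 0 => (hm (n-1) (by omega)).mpr (by omega)
    omega
  · have f1 := (hm a ha).mp (by omega)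
    have f2 := (hm (b+1) (by omega)).mpr (by omega)
    have f3 := (hm (b-1) (by omega)).mpr (by omega)
    omega
  · have f1 := (hm b hb).mpr (by omega)
    have f2 := (hm (a+1) (by omega)).mp (by omega)
    have f3 := (hm (a-1) (by omega)).mp (by omega)
    omega
  · have f1 := (hm (a+1) (by omega)).mp (by omega)
    have f2 := (hm (a-1) (by omega)).mp (by omega)
    omega

private lemma arithB (n k a b : ℕ) (hnk : n = 2*k+1) (hn : 7 ≤ n)
    (ha : a < n) (hb : b < n)
    (hm : ∀ m, m < n →
      (((m = a ∨ (m = a+1 ∨ (a = n-1 ∧ m = 0)) ∨ (a = m+1 ∨ (m = n-1 ∧ a = 0)) ∨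
          (a = n-1 ∧ m = 1) ∨ (a = 1 ∧ m = n-1)) ∧ ((m%2 = 0 ∧ m ≠ 0) ∨ m = n-2)) ↔
       ((m = b ∨ (m = b+1 ∨ (b = n-1 ∧ m = 0)) ∨ (b = m+1 ∨ (m = n-1 ∧ b = 0)) ∨
          (b = n-1 ∧ m = 1) ∨ (b = 1 ∧ m = n-1)) ∧ ((m%2 = 0 ∧ m ≠ 0) ∨ m = n-2)))) :
    a = b := by
  by_cases pa : a % 2 = 0 <;> by_cases pb : b % 2 = 0
  · by_cases ha0 : a = 0 <;> by_cases hb0 : b = 0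
    · omega
    · have f3 := (hm (n-1) (by omega)).mp (by omega)
      have f5 := fun h : b = n-1 => (hm (n-2) (by omega)).mpr (by omega)
      omega
    · have f4 := (hm (n-1) (by omega)).mpr (by omega)
      have f6 := fun h : a = n-1 => (hm (n-2) (by omega)).mp (by omega)
      omega
    · have f1 := (hm a ha).mp (by omega)
      have f2 := (hm b hb).mpr (by omega)
      omega
  · by_cases ha0 : a = 0
    · have f5 := (hm (n-1) (by omega)).mp (by omega)
      have f7 := fun h : b = n-2 => (hm (n-2) (by omega)).mpr (by omega)
      have f8 := fun h : b = 1 => (hm 2 (by omega)).mpr (by omega)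
      omega
    · by_cases hb1 : b = 1
      · have f1 := (hm a ha).mp (by omega)
        have f4 := (hm (n-1) (by omega)).mpr (by omega)
        have f6 := fun h : a = n-1 => (hm (n-2) (by omega)).mp (by omega)
        omega
      · have f1 := (hm a ha).mp (by omega)
        have f2 := (hm (b+1) (by omega)).mpr (by omega)
        have f3 := (hm (b-1) (by omega)).mpr (by omega)
        omega
  · by_cases hb0 : b = 0
    · have f5 := (hm (n-1) (by omega)).mpr (by omega)
      have f7 := fun h : a = n-2 => (hm (n-2) (by omega)).mp (by omega)
      have f8 := fun h : a = 1 => (hm 2 (by omega)).mp (by omega)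
      omega
    · by_cases ha1 : a = 1
      · have f1 := (hm b hb).mpr (by omega)
        have f4 := (hm (n-1) (by omega)).mp (by omega)
        have f6 := fun h : b = n-1 => (hm (n-2) (by omega)).mpr (by omega)
        omega
      · have f1 := (hm b hb).mpr (by omega)
        have f2 := (hm (a+1) (by omega)).mp (by omega)
        have f3 := (hm (a-1) (by omega)).mp (by omega)
        omega
  · by_cases hb1 : b = 1
    · have g1 := (hm (a+1) (by omega)).mp (by omega)
      have g4 := fun h : a = n-2 => (hm 2 (by omega)).mpr (by omega)
      omega
    · by_cases ha1 : a = 1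
      · have g1 := (hm (b+1) (by omega)).mpr (by omega)
        have g4 := fun h : b = n-2 => (hm 2 (by omega)).mp (by omega)
        omega
      · have g1 := (hm (a+1) (by omega)).mp (by omega)
        have g2 := (hm (a-1) (by omega)).mp (by omega)
        omega

private lemma caseA (n k d : ℕ) (hnk : n = 2 * k + 1) (hn : 7 ≤ n)
    (hd2 : d % 2 = 0) (hd4 : 4 ≤ d) (hdn : d + 3 ≤ n) :
    ∃ C : Set (Fin n),
      IsIdCode (cycleGraph n ⊔ edge (⟨0, by omega⟩ : Fin n) (⟨d, by omega⟩ : Fin n)) C ∧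
      C.ncard ≤ k + 1 := by
  have hn2 : 2 ≤ n := by omega
  set CF : Finset (Fin n) :=
    Finset.image (fun i : Fin (k+1) => (⟨2 * i.val, by omega⟩ : Fin n)) Finset.univ with hCF
  have hC : ∀ x : Fin n, x ∈ CF ↔ x.val % 2 = 0 := by
    intro x
    simp only [hCF, Finset.mem_image, Finset.mem_univ, true_and]
    constructor
    · rintro ⟨i, hi⟩
      have := congrArg Fin.val hi
      simp only at this
      omega
    · intro hx
      have hx' := x.isLt
      refine ⟨⟨x.val / 2, by omega⟩, ?_⟩
      apply Fin.ext
      simp only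
      omega
  have hcard : (↑CF : Set (Fin n)).ncard ≤ k + 1 := by
    rw [Set.ncard_coe_finset]
    exact Finset.card_image_le.trans (by simp)
  refine ⟨↑CF, ?_, hcard⟩
  have hQ : ∀ x y : Fin n,
      (y ∈ cnbr (cycleGraph n ⊔ edge (⟨0, by omega⟩ : Fin n) (⟨d, by omega⟩ : Fin n)) x ∩ ↑CF) ↔
      ((y.val = x.val ∨
        (y.val = x.val + 1 ∨ (x.val = n - 1 ∧ y.val = 0)) ∨
        (x.val = y.val + 1 ∨ (y.val = n - 1 ∧ x.val = 0)) ∨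
        (x.val = 0 ∧ y.val = d) ∨ (x.val = d ∧ y.val = 0)) ∧ y.val % 2 = 0) := by
    intro x y
    have hx := x.isLt; have hy := y.isLt
    rw [Set.mem_inter_iff, cnbr, Set.mem_insert_iff, SimpleGraph.mem_neighborSet, sup_adj,
      cycleGraph_adj', edge_adj, Finset.mem_coe, hC,
      fin_sub_val_one hn2, fin_sub_val_one hn2, Fin.ext_iff, Fin.ext_iff, Fin.ext_iff,
      Fin.ext_iff, Fin.ext_iff, ne_eq, Fin.ext_iff]
    simp only
    omega
  constructor
  · intro x
    have hx := x.isLt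
    by_cases hpar : x.val % 2 = 0
    · exact ⟨x, (hQ x x).2 ⟨Or.inl rfl, hpar⟩⟩
    · refine ⟨⟨x.val + 1, by omega⟩, (hQ x ⟨x.val + 1, by omega⟩).2 ?_⟩
      refine ⟨Or.inr (Or.inl (Or.inl ?_)), ?_⟩ <;> simp only <;> omega
  · intro x y hxy
    have hx := x.isLt; have hy := y.isLt
    have hm : ∀ m, m < n →
        (((m = x.val ∨ (m = x.val+1 ∨ (x.val = n-1 ∧ m = 0)) ∨
            (x.val = m+1 ∨ (m = n-1 ∧ x.val = 0)) ∨
            (x.val = 0 ∧ m = d) ∨ (x.val = d ∧ m = 0)) ∧ m%2 = 0) ↔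
         ((m = y.val ∨ (m = y.val+1 ∨ (y.val = n-1 ∧ m = 0)) ∨
            (y.val = m+1 ∨ (m = n-1 ∧ y.val = 0)) ∨
            (y.val = 0 ∧ m = d) ∨ (y.val = d ∧ m = 0)) ∧ m%2 = 0)) := by
      intro m hmn
      have h := (hQ x ⟨m, hmn⟩).symm.trans ((Set.ext_iff.mp hxy ⟨m, hmn⟩).trans (hQ y ⟨m, hmn⟩))
      simp only [Fin.val_mk] at h
      exact h
    exact Fin.ext (arithA n k d x.val y.val hnk hn hd2 hd4 hdn hx hy hm)

private lemma caseB (n k : ℕ) (hnk : n = 2 * k + 1) (hn : 7 ≤ n) :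
    ∃ C : Set (Fin n),
      IsIdCode (cycleGraph n ⊔ edge (⟨n-1, by omega⟩ : Fin n) (⟨1, by omega⟩ : Fin n)) C ∧
      C.ncard ≤ k + 1 := by
  have hn2 : 2 ≤ n := by omega
  set CF : Finset (Fin n) :=
    Finset.image (fun i : Fin (k+1) =>
      if i.val = 0 then (⟨n-2, by omega⟩ : Fin n) else ⟨2 * i.val, by omega⟩) Finset.univ with hCF
  have hC : ∀ x : Fin n, x ∈ CF ↔ ((x.val % 2 = 0 ∧ x.val ≠ 0) ∨ x.val = n - 2) := by
    intro x
    simp only [hCF, Finset.mem_image, Finset.mem_univ, true_and]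
    constructor
    · rintro ⟨i, hi⟩
      by_cases h0 : i.val = 0
      · rw [if_pos h0] at hi
        have := congrArg Fin.val hi
        simp only at this
        omega
      · rw [if_neg h0] at hi
        have := congrArg Fin.val hi
        simp only at this
        have hik := i.isLt
        omega
    · intro hx
      have hx' := x.isLt
      by_cases hx2 : x.val = n - 2
      · refine ⟨⟨0, by omega⟩, ?_⟩
        rw [if_pos rfl]
        apply Fin.ext
        simp only
        omega
      · refine ⟨⟨x.val / 2, by omega⟩, ?_⟩
        rw [if_neg (by simp only; omega)]
        apply Fin.ext
        simp only
        omega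
  have hcard : (↑CF : Set (Fin n)).ncard ≤ k + 1 := by
    rw [Set.ncard_coe_finset]
    exact Finset.card_image_le.trans (by simp)
  refine ⟨↑CF, ?_, hcard⟩
  have hQ : ∀ x y : Fin n,
      (y ∈ cnbr (cycleGraph n ⊔ edge (⟨n-1, by omega⟩ : Fin n) (⟨1, by omega⟩ : Fin n)) x ∩ ↑CF) ↔
      ((y.val = x.val ∨
        (y.val = x.val + 1 ∨ (x.val = n - 1 ∧ y.val = 0)) ∨
        (x.val = y.val + 1 ∨ (y.val = n - 1 ∧ x.val = 0)) ∨
        (x.val = n - 1 ∧ y.val = 1) ∨ (x.val = 1 ∧ y.val = n - 1)) ∧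
        ((y.val % 2 = 0 ∧ y.val ≠ 0) ∨ y.val = n - 2)) := by
    intro x y
    have hx := x.isLt; have hy := y.isLt
    rw [Set.mem_inter_iff, cnbr, Set.mem_insert_iff, SimpleGraph.mem_neighborSet, sup_adj,
      cycleGraph_adj', edge_adj, Finset.mem_coe, hC,
      fin_sub_val_one hn2, fin_sub_val_one hn2, Fin.ext_iff, Fin.ext_iff, Fin.ext_iff,
      Fin.ext_iff, Fin.ext_iff, ne_eq, Fin.ext_iff]
    simp only
    omega
  constructor
  · intro x
    have hx := x.isLt
    by_cases h0 : x.val = 0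
    · refine ⟨⟨n-1, by omega⟩, (hQ x ⟨n-1, by omega⟩).2 ?_⟩
      refine ⟨Or.inr (Or.inr (Or.inl (Or.inr ⟨?_, ?_⟩))), Or.inl ⟨?_, ?_⟩⟩ <;> (try simp only) <;> omega
    · by_cases hpar : x.val % 2 = 0
      · exact ⟨x, (hQ x x).2 ⟨Or.inl rfl, Or.inl ⟨hpar, h0⟩⟩⟩
      · refine ⟨⟨x.val + 1, by omega⟩, (hQ x ⟨x.val + 1, by omega⟩).2 ?_⟩
        refine ⟨Or.inr (Or.inl (Or.inl ?_)), Or.inl ⟨?_, ?_⟩⟩ <;> simp only <;> omega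
  · intro x y hxy
    have hx := x.isLt; have hy := y.isLt
    have hm : ∀ m, m < n →
        (((m = x.val ∨ (m = x.val+1 ∨ (x.val = n-1 ∧ m = 0)) ∨
            (x.val = m+1 ∨ (m = n-1 ∧ x.val = 0)) ∨
            (x.val = n-1 ∧ m = 1) ∨ (x.val = 1 ∧ m = n-1)) ∧
            ((m%2 = 0 ∧ m ≠ 0) ∨ m = n-2)) ↔
         ((m = y.val ∨ (m = y.val+1 ∨ (y.val = n-1 ∧ m = 0)) ∨
            (y.val = m+1 ∨ (m = n-1 ∧ y.val = 0)) ∨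
            (y.val = n-1 ∧ m = 1) ∨ (y.val = 1 ∧ m = n-1)) ∧
            ((m%2 = 0 ∧ m ≠ 0) ∨ m = n-2))) := by
      intro m hmn
      have h := (hQ x ⟨m, hmn⟩).symm.trans ((Set.ext_iff.mp hxy ⟨m, hmn⟩).trans (hQ y ⟨m, hmn⟩))
      simp only [Fin.val_mk] at h
      exact h
    exact Fin.ext (arithB n k x.val y.val hnk hn hx hy hm)

theorem stmt_13 (n k : ℕ) (hnk : n = 2 * k + 1) (hn : 7 ≤ n)
    (u v : Fin n) (huv : u ≠ v) (hna : ¬ (SimpleGraph.cycleGraph n).Adj u v) :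
    ∃ C : Set (Fin n),
      IsIdCode (SimpleGraph.cycleGraph n ⊔ SimpleGraph.edge u v) C ∧
      C.ncard ≤ k + 1 := by
  haveI : NeZero n := ⟨by omega⟩
  have hn2 : 2 ≤ n := by omega
  obtain ⟨p, q, hpq, hEdge, hnap, heven⟩ :
      ∃ p q : Fin n, p ≠ q ∧ edge u v = edge p q ∧ ¬ (cycleGraph n).Adj p q ∧
        (q - p).val % 2 = 0 := by
    rcases eq_or_ne ((v - u).val % 2) 0 with h | h
    · exact ⟨u, v, huv, rfl, hna, h⟩
    · refine ⟨v, u, huv.symm, edge_comm' u v, fun hadj => hna hadj.symm, ?_⟩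
      have hcomp := fin_sub_val_comp u v huv
      have hlt := (v - u).isLt
      omega
  set g := (q - p).val with hg
  have hglt : g < n := (q - p).isLt
  have hcomp := fin_sub_val_comp p q hpq
  have hgadj : ¬((p - q).val = 1 ∨ (q - p).val = 1) := by
    rw [← cycleGraph_adj']; exact hnap
  have hg0 : g ≠ 0 := hcomp.1
  have hg1 : g ≠ 1 := fun h => hgadj (Or.inr h)
  have hgn1 : g ≠ n - 1 := by
    intro h
    exact hgadj (Or.inl (by omega))
  by_cases hg2 : g = 2
  · -- chord of cyclic distance 2 : use case B with chord (n-1, 1)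
    obtain ⟨C, hid, hcard⟩ := caseB n k hnk hn
    set A : Fin n := ⟨n-1, by omega⟩ with hA'
    set B : Fin n := ⟨1, by omega⟩ with hB'
    set c : Fin n := p - A with hc
    have hA : p = A + c := by rw [hc]; abel
    have hBA : B - A = q - p := by
      apply Fin.ext
      rw [fin_sub_val]
      simp only [hA', hB', Fin.val_mk]
      rw [Nat.mod_eq_of_lt (by omega)]
      omega
    have hB : q = B + c := by
      rw [hc, show B + (p - A) = p + (B - A) by abel, hBA]
      abel
    have φ := transIso n A B p q c hA hB
    refine ⟨⇑φ '' C, ?_, ?_⟩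
    · rw [hEdge]
      exact idcode_map φ hid
    · rw [Set.ncard_image_of_injective _ (show Function.Injective ⇑φ from φ.toEquiv.injective)]
      exact hcard
  · -- chord of even cyclic distance ≥ 4 : use case A with chord (0, g)
    have hd4 : 4 ≤ g := by omega
    have hdn : g + 3 ≤ n := by omega
    obtain ⟨C, hid, hcard⟩ := caseA n k g hnk hn (by omega) hd4 hdn
    set A : Fin n := ⟨0, by omega⟩ with hA'
    set B : Fin n := ⟨g, by omega⟩ with hB'
    set c : Fin n := p with hc
    have hA0 : A = (0 : Fin n) := by
      apply Fin.ext
      simp only [hA', Fin.val_mk]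
      simp
    have hA : p = A + c := by rw [hA0, hc]; abel
    have hBg : B = q - p := by
      apply Fin.ext
      simp only [hB', Fin.val_mk, hg]
      rfl
    have hB : q = B + c := by rw [hBg, hc]; abel
    have φ := transIso n A B p q c hA hB
    refine ⟨⇑φ '' C, ?_, ?_⟩
    · rw [hEdge]
      exact idcode_map φ hid
    · rw [Set.ncard_image_of_injective _ (show Function.Injective ⇑φ from φ.toEquiv.injective)]
      exact hcard
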